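/- The dimension of V, the linear span in ℝ^E of the image under L of D±(Ω), is at least D := Σ_{V ∈ Σ} (l−1)^{|V|}, where Σ is the set of partial contexts. -/

import Mathlib

open Finset

noncomputable section

/-- Restriction of a global assignment `ω : X → O` to a context `U`. -/
def restr {X O : Type} (U : Finset X) (ω : X → O) : {x // x ∈ U} → O :=
  fun x => ω x.1

/-- Restriction of a section on `U` along a subset inclusion `V ⊆ U`. -/
def restrSec {X O : Type} {U V : Finset X} (h : V ⊆ U)
    (t : {x // x ∈ U} → O) : {x // x ∈ V} → O :=
  fun x => t ⟨x.1, h x.2⟩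

/-- The total weight `e(U)` of a context `U` under the table `e`. -/
def eCtx {X O : Type} [Fintype X] [DecidableEq X] [Fintype O] [DecidableEq O]
    (𝒰 : Finset (Finset X))
    (e : (U : {U // U ∈ 𝒰}) → ({x // x ∈ U.1} → O) → ℝ)
    (U : {U // U ∈ 𝒰}) : ℝ :=
  ∑ s : {x // x ∈ U.1} → O, e U s

/-- `e` is an empirical model over the cover `𝒰`: it is a nonnegative table of
total mass one, assigning positive weight to every context. -/
def IsEmpirical {X O : Type} [Fintype X] [DecidableEq X] [Fintype O] [DecidableEq O]
    (𝒰 : Finset (Finset X))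
    (e : (U : {U // U ∈ 𝒰}) → ({x // x ∈ U.1} → O) → ℝ) : Prop :=
  (∀ U s, 0 ≤ e U s) ∧
  (∑ U : {U // U ∈ 𝒰}, eCtx 𝒰 e U = 1) ∧
  (∀ U : {U // U ∈ 𝒰}, 0 < eCtx 𝒰 e U)

/-- The conditional probability `e_U(s) = e(U,s)/e(U)`. -/
def eCond {X O : Type} [Fintype X] [DecidableEq X] [Fintype O] [DecidableEq O]
    (𝒰 : Finset (Finset X))
    (e : (U : {U // U ∈ 𝒰}) → ({x // x ∈ U.1} → O) → ℝ)
    (U : {U // U ∈ 𝒰}) (s : {x // x ∈ U.1} → O) : ℝ :=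
  e U s / eCtx 𝒰 e U

/-- The No-Signalling condition: for any two contexts, the two conditional
distributions have the same marginal on the intersection. -/
def NoSignalling {X O : Type} [Fintype X] [DecidableEq X] [Fintype O] [DecidableEq O]
    (𝒰 : Finset (Finset X))
    (e : (U : {U // U ∈ 𝒰}) → ({x // x ∈ U.1} → O) → ℝ) : Prop :=
  ∀ U U' : {U // U ∈ 𝒰}, ∀ s : {x // x ∈ U.1 ∩ U'.1} → O,
    (∑ t : {x // x ∈ U.1} → O,
      if restrSec (V := U.1 ∩ U'.1) (fun _ hx => (Finset.mem_inter.mp hx).1) t = s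
        then eCond 𝒰 e U t else 0) =
    (∑ t' : {x // x ∈ U'.1} → O,
      if restrSec (V := U.1 ∩ U'.1) (fun _ hx => (Finset.mem_inter.mp hx).2) t' = s
        then eCond 𝒰 e U' t' else 0)

/-- Marginal of an schv model on global assignments. -/
def mOmega {X O : Type} [Fintype X] [DecidableEq X] [Fintype O] [DecidableEq O]
    (𝒰 : Finset (Finset X)) (m : (X → O) → {U // U ∈ 𝒰} → ℝ) (ω : X → O) : ℝ :=
  ∑ U : {U // U ∈ 𝒰}, m ω U

/-- Marginal of an schv model on contexts. -/
def mCtx {X O : Type} [Fintype X] [DecidableEq X] [Fintype O] [DecidableEq O]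
    (𝒰 : Finset (Finset X)) (m : (X → O) → {U // U ∈ 𝒰} → ℝ) (U : {U // U ∈ 𝒰}) : ℝ :=
  ∑ ω : X → O, m ω U

/-- `m` is a signed canonical hidden-variable model: a signed measure of total mass one
on `Ω × 𝒰`. -/
def IsSchv {X O : Type} [Fintype X] [DecidableEq X] [Fintype O] [DecidableEq O]
    (𝒰 : Finset (Finset X)) (m : (X → O) → {U // U ∈ 𝒰} → ℝ) : Prop :=
  ∑ ω : X → O, ∑ U : {U // U ∈ 𝒰}, m ω U = 1

/-- Lambda-Independence: `m` factors as the product of its two marginals. -/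
def LambdaIndep {X O : Type} [Fintype X] [DecidableEq X] [Fintype O] [DecidableEq O]
    (𝒰 : Finset (Finset X)) (m : (X → O) → {U // U ∈ 𝒰} → ℝ) : Prop :=
  ∀ ω U, m ω U = mOmega 𝒰 m ω * mCtx 𝒰 m U

/-- The canonical hidden-variable model `m` realizes the empirical table `e`. -/
def Realizes {X O : Type} [Fintype X] [DecidableEq X] [Fintype O] [DecidableEq O]
    (𝒰 : Finset (Finset X)) (m : (X → O) → {U // U ∈ 𝒰} → ℝ)
    (e : (U : {U // U ∈ 𝒰}) → ({x // x ∈ U.1} → O) → ℝ) : Prop :=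
  ∀ (U : {U // U ∈ 𝒰}) (s : {x // x ∈ U.1} → O),
    e U s = ∑ ω : X → O, if restr U.1 ω = s then m ω U else 0

/-- The linear map `L : ℝ^Ω → ℝ^E`. -/
def Lmap {X O : Type} [Fintype X] [DecidableEq X] [Fintype O] [DecidableEq O]
    (𝒰 : Finset (Finset X)) (v : (X → O) → ℝ) :
    (Σ U : {U // U ∈ 𝒰}, ({x // x ∈ U.1} → O)) → ℝ :=
  fun p => ∑ ω : X → O, if restr p.1.1 ω = p.2 then v ω else 0

/-- The vector in `ℝ^E` induced by an empirical table `e`. -/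
def indVec {X O : Type} [Fintype X] [DecidableEq X] [Fintype O] [DecidableEq O]
    (𝒰 : Finset (Finset X))
    (e : (U : {U // U ∈ 𝒰}) → ({x // x ∈ U.1} → O) → ℝ) :
    (Σ U : {U // U ∈ 𝒰}, ({x // x ∈ U.1} → O)) → ℝ :=
  fun p => eCond 𝒰 e p.1 p.2


section AuxProof

variable {X : Type} [Fintype X] [DecidableEq X] {l : ℕ} [NeZero l]

/-- Support of a global assignment. -/
def suppF (l : ℕ) [NeZero l] (ω : X → Fin l) : Finset X :=
  Finset.univ.filter (fun x => ω x ≠ 0)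

lemma mem_suppF {ω : X → Fin l} {x : X} : x ∈ suppF l ω ↔ ω x ≠ 0 := by
  simp [suppF]

lemma card_suppF_fiber (V : Finset X) :
    (Finset.univ.filter (fun ω : X → Fin l => suppF l ω = V)).card = (l - 1) ^ V.card := by
  rw [← Fintype.card_subtype]
  have e : {ω : X → Fin l // suppF l ω = V} ≃ ({x // x ∈ V} → {y : Fin l // y ≠ 0}) :=
    { toFun := fun ω x => ⟨ω.1 x.1, mem_suppF.mp (by rw [ω.2]; exact x.2)⟩
      invFun := fun f => ⟨fun x => if h : x ∈ V then (f ⟨x, h⟩).1 else 0, by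
        ext x
        rw [mem_suppF]
        by_cases h : x ∈ V
        · simp [h, (f ⟨x, h⟩).2]
        · simp [h]⟩
      left_inv := fun ω => by
        apply Subtype.ext
        funext x
        by_cases h : x ∈ V
        · simp [h]
        · have h0 : ω.1 x = 0 := by
            by_contra hne
            exact h (ω.2 ▸ mem_suppF.mpr hne)
          simp [h, h0]
      right_inv := fun f => by
        funext x
        apply Subtype.ext
        simp [x.2] }
  rw [Fintype.card_congr e, Fintype.card_fun]
  have h1 : Fintype.card {y : Fin l // y ≠ 0} = l - 1 := by
    have := Fintype.card_subtype_compl (fun y : Fin l => y = 0)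
    simpa using this
  rw [h1, Fintype.card_coe]

lemma sum_pow_eq_card (𝒰 : Finset (Finset X)) :
    ∑ V ∈ Finset.univ.filter (fun V : Finset X => ∃ U ∈ 𝒰, V ⊆ U), (l - 1) ^ V.card
      = Fintype.card {ω : X → Fin l // ∃ U ∈ 𝒰, suppF l ω ⊆ U} := by
  rw [Fintype.card_subtype]
  rw [Finset.card_eq_sum_card_fiberwise (f := suppF l)
      (t := Finset.univ.filter (fun V : Finset X => ∃ U ∈ 𝒰, V ⊆ U))
      (fun ω hω => by
        simp only [Finset.mem_coe, Finset.mem_filter, Finset.mem_univ, true_and] at hω ⊢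
        exact hω)]
  apply Finset.sum_congr rfl
  intro V hV
  rw [← card_suppF_fiber (l := l) V]
  congr 1
  ext ω
  simp only [Finset.mem_filter, Finset.mem_univ, true_and]
  simp only [Finset.mem_filter, Finset.mem_univ, true_and] at hV
  obtain ⟨U, hU, hVU⟩ := hV
  constructor
  · intro h
    exact ⟨⟨U, hU, by rw [h]; exact hVU⟩, h⟩
  · exact fun h => h.2

/-- The marginal-on-`suppF j` functional, as a plain function. -/
def Gfun (l : ℕ) [NeZero l] (j : X → Fin l) (v : (X → Fin l) → ℝ) : ℝ :=
  ∑ ω : X → Fin l, if ∀ x ∈ suppF l j, ω x = j x then v ω else 0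

/-- The corresponding functional on `ℝ^E`, computed in the context `U`. -/
def Hfun (𝒰 : Finset (Finset X)) (U : {U // U ∈ 𝒰}) (j : X → Fin l) :
    ((Σ U : {U // U ∈ 𝒰}, ({x // x ∈ U.1} → Fin l)) → ℝ) →ₗ[ℝ] ℝ where
  toFun w := ∑ s : {x // x ∈ U.1} → Fin l,
    if ∀ x : {x // x ∈ U.1}, x.1 ∈ suppF l j → s x = j x.1 then w ⟨U, s⟩ else 0
  map_add' a b := by
    rw [← Finset.sum_add_distrib]
    exact Finset.sum_congr rfl fun s _ => by split_ifs <;> simp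
  map_smul' c a := by
    rw [RingHom.id_apply, Finset.smul_sum]
    exact Finset.sum_congr rfl fun s _ => by split_ifs <;> simp

lemma Hfun_Lmap (𝒰 : Finset (Finset X)) (U : {U // U ∈ 𝒰}) (j : X → Fin l)
    (hU : suppF l j ⊆ U.1) (v : (X → Fin l) → ℝ) :
    Hfun 𝒰 U j (Lmap 𝒰 v) = Gfun l j v := by
  show (∑ s : {x // x ∈ U.1} → Fin l,
      if ∀ x : {x // x ∈ U.1}, x.1 ∈ suppF l j → s x = j x.1
      then Lmap 𝒰 v ⟨U, s⟩ else 0) = Gfun l j v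
  unfold Lmap Gfun
  have step1 : ∀ s : {x // x ∈ U.1} → Fin l,
      (if (∀ x : {x // x ∈ U.1}, x.1 ∈ suppF l j → s x = j x.1)
        then (∑ ω : X → Fin l, if restr U.1 ω = s then v ω else 0) else 0)
      = ∑ ω : X → Fin l, if restr U.1 ω = s then
          (if (∀ x : {x // x ∈ U.1}, x.1 ∈ suppF l j → s x = j x.1) then v ω else 0) else 0 := by
    intro s
    split_ifs with h <;> simp [h]
  simp only [step1]
  rw [Finset.sum_comm]
  apply Finset.sum_congr rfl
  intro ω _
  rw [Finset.sum_ite_eq Finset.univ (restr U.1 ω)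
    (fun s => if (∀ x : {x // x ∈ U.1}, x.1 ∈ suppF l j → s x = j x.1) then v ω else 0)]
  simp only [Finset.mem_univ, if_true]
  have hiff : (∀ x : {x // x ∈ U.1}, x.1 ∈ suppF l j → restr U.1 ω x = j x.1)
      ↔ (∀ x ∈ suppF l j, ω x = j x) := by
    constructor
    · intro h x hx
      exact h ⟨x, hU hx⟩ hx
    · intro h x hx
      exact h x.1 hx
  simp only [hiff]

lemma Gfun_delta (j k : X → Fin l) :
    Gfun l j (fun ω => if ω = k then (1:ℝ) else 0)
      = if ∀ x ∈ suppF l j, k x = j x then (1:ℝ) else 0 := by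
  unfold Gfun
  have step : ∀ ω : X → Fin l,
      (if ∀ x ∈ suppF l j, ω x = j x then (if ω = k then (1:ℝ) else 0) else 0)
      = if ω = k then (if ∀ x ∈ suppF l j, ω x = j x then (1:ℝ) else 0) else 0 := by
    intro ω
    split_ifs <;> simp_all
  simp only [step]
  rw [Finset.sum_ite_eq' Finset.univ k
    (fun ω => if ∀ x ∈ suppF l j, ω x = j x then (1:ℝ) else 0)]
  simp

lemma indepM (p : (X → Fin l) → Prop) [DecidablePred p] :
    LinearIndependent ℝ (fun k : {ω : X → Fin l // p ω} => fun j : {ω : X → Fin l // p ω} =>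
      if ∀ x ∈ suppF l j.1, k.1 x = j.1 x then (1:ℝ) else 0) := by
  rw [Fintype.linearIndependent_iff]
  intro c hc
  by_contra hne
  push_neg at hne
  obtain ⟨k0, hk0⟩ := hne
  obtain ⟨k, hk, hkmax⟩ := Finset.exists_max_image
      (Finset.univ.filter fun k : {ω : X → Fin l // p ω} => c k ≠ 0)
      (fun k => (suppF l k.1).card) ⟨k0, by simp [hk0]⟩
  have hck : c k ≠ 0 := (Finset.mem_filter.mp hk).2
  have h0 := congrFun hc k
  rw [Finset.sum_apply] at h0
  simp only [Pi.smul_apply, smul_eq_mul, Pi.zero_apply] at h0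
  rw [Finset.sum_eq_single k] at h0
  · simp only [mul_ite, mul_one, mul_zero] at h0
    simp only [eq_self_iff_true, imp_true_iff, if_true] at h0
    exact hck h0
  · intro i _ hik
    by_cases hci : c i = 0
    · simp [hci]
    · have hi : i ∈ Finset.univ.filter fun k : {ω : X → Fin l // p ω} => c k ≠ 0 :=
        Finset.mem_filter.mpr ⟨Finset.mem_univ _, hci⟩
      have hcond : ¬ (∀ x ∈ suppF l k.1, i.1 x = k.1 x) := by
        intro h
        have hsub : suppF l k.1 ⊆ suppF l i.1 := by
          intro x hx
          have hx' : k.1 x ≠ 0 := mem_suppF.mp hx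
          refine mem_suppF.mpr ?_
          rw [h x hx]
          exact hx'
        have heq : suppF l k.1 = suppF l i.1 :=
          Finset.eq_of_subset_of_card_le hsub (hkmax i hi)
        apply hik
        apply Subtype.ext
        funext x
        by_cases hx : x ∈ suppF l k.1
        · exact h x hx
        · have h1 : i.1 x = 0 := by
            by_contra hh
            have hmem : x ∈ suppF l i.1 := mem_suppF.mpr hh
            rw [← heq] at hmem
            exact hx hmem
          have h2 : k.1 x = 0 := by
            by_contra hh
            exact hx (mem_suppF.mpr hh)
          rw [h1, h2]
      simp [hcond]
  · intro h
    exact absurd (Finset.mem_univ k) h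

end AuxProof

/-- the span `V` of the image under `L` of `D±(Ω)` has dimension at
least `D = Σ_{V ∈ Σ} (l-1)^{|V|}`, `Σ` the set of partial contexts. -/
theorem finrank_span_Lmap_ge {X : Type} [Fintype X] [DecidableEq X]
    (l : ℕ) (hl : 0 < l) (𝒰 : Finset (Finset X)) :
    ∑ V ∈ Finset.univ.filter (fun V : Finset X => ∃ U ∈ 𝒰, V ⊆ U), (l - 1) ^ V.card ≤
    Module.finrank ℝ (Submodule.span ℝ
      {w : (Σ U : {U // U ∈ 𝒰}, ({x // x ∈ U.1} → Fin l)) → ℝ |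
        ∃ v : (X → Fin l) → ℝ, (∑ ω : X → Fin l, v ω = 1) ∧ w = Lmap 𝒰 v}) := by
  haveI : NeZero l := ⟨hl.ne'⟩
  rw [sum_pow_eq_card 𝒰]
  have exU : ∀ j : {ω : X → Fin l // ∃ U ∈ 𝒰, suppF l ω ⊆ U},
      ∃ U : {U // U ∈ 𝒰}, suppF l j.1 ⊆ U.1 := by
    rintro ⟨ω, U, hU, hsub⟩
    exact ⟨⟨U, hU⟩, hsub⟩
  choose Uof hUof using exU
  set H : ((Σ U : {U // U ∈ 𝒰}, ({x // x ∈ U.1} → Fin l)) → ℝ) →ₗ[ℝ]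
      ({ω : X → Fin l // ∃ U ∈ 𝒰, suppF l ω ⊆ U} → ℝ) :=
    LinearMap.pi (fun j => Hfun 𝒰 (Uof j) j.1) with hH
  refine le_trans ?_ (Submodule.finrank_map_le H _)
  set M : {ω : X → Fin l // ∃ U ∈ 𝒰, suppF l ω ⊆ U} →
      {ω : X → Fin l // ∃ U ∈ 𝒰, suppF l ω ⊆ U} → ℝ :=
    fun k j => if ∀ x ∈ suppF l j.1, k.1 x = j.1 x then (1:ℝ) else 0 with hM
  have hmem : ∀ k, M k ∈ Submodule.map H (Submodule.span ℝ
      {w : (Σ U : {U // U ∈ 𝒰}, ({x // x ∈ U.1} → Fin l)) → ℝ |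
        ∃ v : (X → Fin l) → ℝ, (∑ ω : X → Fin l, v ω = 1) ∧ w = Lmap 𝒰 v}) := by
    intro k
    refine ⟨Lmap 𝒰 (fun ω => if ω = k.1 then (1:ℝ) else 0), Submodule.subset_span ?_, ?_⟩
    · refine ⟨fun ω => if ω = k.1 then (1:ℝ) else 0, ?_, rfl⟩
      rw [Finset.sum_ite_eq' Finset.univ k.1 (fun _ => (1:ℝ))]
      simp
    · funext j
      show Hfun 𝒰 (Uof j) j.1 (Lmap 𝒰 (fun ω => if ω = k.1 then (1:ℝ) else 0)) = M k j
      rw [Hfun_Lmap 𝒰 (Uof j) j.1 (hUof j), Gfun_delta j.1 k.1]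
  have hindep : LinearIndependent ℝ M := indepM (fun ω => ∃ U ∈ 𝒰, suppF l ω ⊆ U)
  have hindep2 : LinearIndependent ℝ (fun k => (⟨M k, hmem k⟩ :
      Submodule.map H (Submodule.span ℝ
        {w : (Σ U : {U // U ∈ 𝒰}, ({x // x ∈ U.1} → Fin l)) → ℝ |
          ∃ v : (X → Fin l) → ℝ, (∑ ω : X → Fin l, v ω = 1) ∧ w = Lmap 𝒰 v}))) :=
    LinearIndependent.of_comp (Submodule.subtype _) hindep
  exact hindep2.fintype_card_le_finrank
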